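/- Let λ_{n,b} = 2∫₀^∞ φ_n(bx) f(x) dx where φ_n(x) = ∫₀^π e^{-2x sin η} cos(2nη) dη, b > 0, and f ∈ C²((0,∞)) is nonnegative with: limsup_{x→0⁺} x|f(x)| and limsup_{x→0⁺} x²|f'(x)| finite, lim_{x→∞} f(x) = 0, lim_{x→∞} x f'(x) = 0, and f''(x) ≥ 0 for all x > 0. Then for every n ≥ 2, λ_{n+1,b} + λ_{n-1,b} - 2λ_{n,b} ≥ 0 (the spectrum is convex in n). -/

import Mathlib

open Real MeasureTheory Filter

/-- The universal function `φ_n`. -/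
noncomputable def phi (n : ℕ) (x : ℝ) : ℝ :=
  ∫ η in (0:ℝ)..π, Real.exp (-2 * x * Real.sin η) * Real.cos (2 * n * η)

/-- The spectrum `λ_{n,b} = 2∫₀^∞ φ_n(bx) f(x) dx` for a measure with density `x f(x) dx/x`. -/
noncomputable def lamf (b : ℝ) (f : ℝ → ℝ) (n : ℕ) : ℝ :=
  2 * ∫ x in Set.Ioi (0:ℝ), phi n (b * x) * f x

open intervalIntegral Set

noncomputable def J (P : ℝ → ℝ) (x : ℝ) : ℝ :=
  ∫ η in (0:ℝ)..π, Real.exp (-2 * x * Real.sin η) * P η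

lemma J_hasDerivAt (P : ℝ → ℝ) (hP : Continuous P) (x₀ : ℝ) :
    HasDerivAt (J P) (J (fun η => -2 * Real.sin η * P η) x₀) x₀ := by
  have key := intervalIntegral.hasDerivAt_integral_of_dominated_loc_of_deriv_le
    (F := fun x t => Real.exp (-2 * x * Real.sin t) * P t)
    (F' := fun x t => Real.exp (-2 * x * Real.sin t) * (-2 * Real.sin t * P t))
    (x₀ := x₀) (a := 0) (b := π) (μ := volume)
    (bound := fun t => Real.exp (2 * (|x₀| + 1)) * (2 * |P t|))
    (s := Metric.ball x₀ 1) (Metric.ball_mem_nhds x₀ one_pos) ?_ ?_ ?_ ?_ ?_ ?_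
  · exact key.2
  · filter_upwards with x
    exact (Continuous.aestronglyMeasurable (by continuity)).restrict
  · apply Continuous.intervalIntegrable; continuity
  · exact (Continuous.aestronglyMeasurable (by continuity)).restrict
  · filter_upwards with t ht x hx
    have hs : |Real.sin t| ≤ 1 := abs_sin_le_one t
    have hx' : |x| ≤ |x₀| + 1 := by
      have h1 : |x - x₀| < 1 := mem_ball_iff_norm.mp hx
      calc |x| = |x₀ + (x - x₀)| := by ring_nf
        _ ≤ |x₀| + |x - x₀| := abs_add_le _ _
        _ ≤ |x₀| + 1 := by linarith
    have he : Real.exp (-2 * x * Real.sin t) ≤ Real.exp (2 * (|x₀| + 1)) := by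
      apply Real.exp_le_exp.mpr
      calc -2 * x * Real.sin t ≤ |(-2 * x * Real.sin t)| := le_abs_self _
        _ = 2 * (|x| * |Real.sin t|) := by
            rw [abs_mul, abs_mul]; norm_num; ring
        _ ≤ 2 * ((|x₀| + 1) * 1) := by
            have := abs_nonneg x
            gcongr
        _ ≤ 2 * (|x₀| + 1) := by ring_nf; exact le_refl _
    have habs : |(-2 * Real.sin t * P t)| ≤ 2 * |P t| := by
      rw [abs_mul, abs_mul]
      norm_num
      nlinarith [abs_nonneg (P t), abs_nonneg (Real.sin t)]
    calc ‖Real.exp (-2 * x * Real.sin t) * (-2 * Real.sin t * P t)‖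
        = Real.exp (-2 * x * Real.sin t) * |(-2 * Real.sin t * P t)| := by
          rw [Real.norm_eq_abs, abs_mul, abs_of_pos (Real.exp_pos _)]
      _ ≤ Real.exp (2 * (|x₀| + 1)) * (2 * |P t|) :=
          mul_le_mul he habs (abs_nonneg _) (Real.exp_pos _).le
  · apply Continuous.intervalIntegrable; continuity
  · filter_upwards with t ht x hx
    have h1 : HasDerivAt (fun x : ℝ => -2 * x * Real.sin t) (-2 * Real.sin t) x := by
      have := ((hasDerivAt_id x).const_mul (-2 : ℝ)).mul_const (Real.sin t)
      simpa using this
    have h3 := ((Real.hasDerivAt_exp (-2 * x * Real.sin t)).comp x h1).mul_const (P t)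
    refine h3.congr_deriv ?_
    ring

lemma phi_eq_J (n : ℕ) : phi n = J (fun η => Real.cos (2 * n * η)) := rfl

noncomputable def phiD (n : ℕ) : ℝ → ℝ :=
  J (fun η => -2 * Real.sin η * Real.cos (2 * n * η))

noncomputable def phiDD (n : ℕ) : ℝ → ℝ :=
  J (fun η => -2 * Real.sin η * (-2 * Real.sin η * Real.cos (2 * n * η)))

section Jlin

lemma J_sub (P Q : ℝ → ℝ) (hP : Continuous P) (hQ : Continuous Q) (x : ℝ) :
    J (fun η => P η - Q η) x = J P x - J Q x := by
  unfold J
  rw [← intervalIntegral.integral_sub]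
  · apply intervalIntegral.integral_congr; intro t _; ring
  · apply Continuous.intervalIntegrable; continuity
  · apply Continuous.intervalIntegrable; continuity

lemma J_const_mul (c : ℝ) (P : ℝ → ℝ) (x : ℝ) :
    J (fun η => c * P η) x = c * J P x := by
  unfold J
  rw [← intervalIntegral.integral_const_mul]
  apply intervalIntegral.integral_congr; intro t _; ring

lemma J_congr {P Q : ℝ → ℝ} (h : ∀ η, P η = Q η) (x : ℝ) : J P x = J Q x := by
  unfold J; apply intervalIntegral.integral_congr; intro t _; simp only [h]

end Jlin

lemma J_zero_eval (P : ℝ → ℝ) : J P 0 = ∫ η in (0:ℝ)..π, P η := by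
  unfold J; apply intervalIntegral.integral_congr; intro t _; simp

lemma phi_zero (k : ℕ) (hk : 1 ≤ k) : phi k 0 = 0 := by
  rw [phi_eq_J, J_zero_eval]
  have hk' : (2 * k : ℝ) ≠ 0 := by positivity
  have : ∀ η ∈ Set.uIcc (0:ℝ) π, HasDerivAt (fun η => Real.sin (2 * k * η) / (2 * k))
      (Real.cos (2 * k * η)) η := by
    intro η _
    have h1 : HasDerivAt (fun η : ℝ => 2 * k * η) (2 * k) η := by
      simpa using (hasDerivAt_id η).const_mul (2 * (k:ℝ))
    have h2 := (Real.hasDerivAt_sin (2 * k * η)).comp η h1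
    have h3 := h2.div_const (2 * k)
    refine h3.congr_deriv ?_
    field_simp
  rw [intervalIntegral.integral_eq_sub_of_hasDerivAt this
    (by apply Continuous.intervalIntegrable; continuity)]
  have h2 : (2:ℝ) * k * π = ((2 * k : ℕ) : ℝ) * π := by push_cast; ring
  simp [h2, Real.sin_nat_mul_pi]

lemma phiD_zero (n : ℕ) (hn : 1 ≤ n) : phiD n 0 = 4 / (4 * (n:ℝ)^2 - 1) := by
  unfold phiD
  rw [J_zero_eval]
  have ha : (2 * (n:ℝ) + 1) ≠ 0 := by positivity
  have hc : (2 * (n:ℝ) - 1) ≠ 0 := by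
    have : (1:ℝ) ≤ n := by exact_mod_cast hn
    nlinarith
  have key : ∀ η ∈ Set.uIcc (0:ℝ) π, HasDerivAt (fun η =>
      Real.cos ((2 * n + 1) * η) / (2 * n + 1) - Real.cos ((2 * n - 1) * η) / (2 * n - 1))
      (-2 * Real.sin η * Real.cos (2 * n * η)) η := by
    intro η _
    have d1 : HasDerivAt (fun η : ℝ => (2 * n + 1) * η) (2 * n + 1) η := by
      simpa using (hasDerivAt_id η).const_mul (2 * (n:ℝ) + 1)
    have d2 : HasDerivAt (fun η : ℝ => (2 * n - 1) * η) (2 * n - 1) η := by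
      simpa using (hasDerivAt_id η).const_mul (2 * (n:ℝ) - 1)
    have h1 := ((Real.hasDerivAt_cos ((2 * n + 1) * η)).comp η d1).div_const (2 * (n:ℝ) + 1)
    have h2 := ((Real.hasDerivAt_cos ((2 * n - 1) * η)).comp η d2).div_const (2 * (n:ℝ) - 1)
    have h3 := h1.sub h2
    refine h3.congr_deriv ?_
    have e1 : (2 * (n:ℝ) + 1) * η = 2 * n * η + η := by ring
    have e2 : (2 * (n:ℝ) - 1) * η = 2 * n * η - η := by ring
    rw [e1, e2, Real.sin_add, Real.sin_sub]
    field_simp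
    ring
  rw [intervalIntegral.integral_eq_sub_of_hasDerivAt key
    (by apply Continuous.intervalIntegrable; continuity)]
  have c1 : Real.cos ((2 * (n:ℝ) + 1) * π) = -1 := by
    have : (2 * (n:ℝ) + 1) * π = (n:ℝ) * (2 * π) + π := by ring
    rw [this, Real.cos_add, Real.cos_nat_mul_two_pi]
    simp
  have c2 : Real.cos ((2 * (n:ℝ) - 1) * π) = -1 := by
    have : (2 * (n:ℝ) - 1) * π = (n:ℝ) * (2 * π) + (-π) := by ring
    rw [this, Real.cos_add, Real.cos_nat_mul_two_pi]
    simp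
  rw [c1, c2]
  simp only [mul_zero, Real.cos_zero]
  have hd : (4 * (n:ℝ)^2 - 1) ≠ 0 := by
    have : (1:ℝ) ≤ n := by exact_mod_cast hn
    nlinarith
  field_simp
  have hd' : (n:ℝ)^2 * 4 - 1 ≠ 0 := by rwa [mul_comm] at hd
  rw [eq_div_iff hd']
  ring

lemma hasDerivAt_phi (n : ℕ) (x : ℝ) : HasDerivAt (phi n) (phiD n x) x := by
  rw [phi_eq_J]
  exact J_hasDerivAt _ (by continuity) x

lemma hasDerivAt_phiD (n : ℕ) (x : ℝ) : HasDerivAt (phiD n) (phiDD n x) x :=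
  J_hasDerivAt _ (by continuity) x

lemma continuous_phi (n : ℕ) : Continuous (phi n) := by
  have : Differentiable ℝ (phi n) := fun x => (hasDerivAt_phi n x).differentiableAt
  exact this.continuous

lemma continuous_phiD (n : ℕ) : Continuous (phiD n) := by
  have : Differentiable ℝ (phiD n) := fun x => (hasDerivAt_phiD n x).differentiableAt
  exact this.continuous

lemma phiDD_eq (m : ℕ) (x : ℝ) :
    phiDD (m + 1) x = 2 * phi (m + 1) x - phi (m + 2) x - phi m x := by
  have key : ∀ η : ℝ, -2 * Real.sin η * (-2 * Real.sin η * Real.cos (2 * (m+1:ℕ) * η))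
      = 2 * Real.cos (2 * (m+1:ℕ) * η) - (Real.cos (2 * (m+2:ℕ) * η) + Real.cos (2 * (m:ℕ) * η)) := by
    intro η
    have e1 : (2 * ((m:ℝ)+2) * η) = 2 * ((m:ℝ)+1) * η + 2 * η := by ring
    have e2 : (2 * (m:ℝ) * η) = 2 * ((m:ℝ)+1) * η - 2 * η := by ring
    have hcast1 : ((m + 1 : ℕ) : ℝ) = (m:ℝ) + 1 := by push_cast; ring
    have hcast2 : ((m + 2 : ℕ) : ℝ) = (m:ℝ) + 2 := by push_cast; ring
    rw [hcast1, hcast2, e1, e2, Real.cos_add, Real.cos_sub]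
    have h2 : Real.cos (2 * η) = 1 - 2 * Real.sin η ^ 2 := by
      rw [Real.cos_two_mul]
      nlinarith [Real.sin_sq_add_cos_sq η]
    rw [h2]
    ring
  unfold phiDD
  rw [J_congr key x]
  have cc : ∀ k : ℕ, Continuous (fun η : ℝ => Real.cos (2 * (k:ℕ) * η)) := fun k =>
    Real.continuous_cos.comp (continuous_const.mul continuous_id)
  have c1 : Continuous (fun η : ℝ => 2 * Real.cos (2 * (m+1:ℕ) * η)) :=
    continuous_const.mul (cc (m+1))
  have c2 : Continuous (fun η : ℝ => Real.cos (2 * (m+2:ℕ) * η) + Real.cos (2 * (m:ℕ) * η)) :=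
    (cc (m+2)).add (cc m)
  rw [J_sub _ _ c1 c2, J_const_mul]
  have : J (fun η => Real.cos (2 * (m+2:ℕ) * η) + Real.cos (2 * (m:ℕ) * η)) x
      = phi (m + 2) x + phi m x := by
    have := J_sub (fun η => Real.cos (2 * (m+2:ℕ) * η))
      (fun η => -Real.cos (2 * (m:ℕ) * η)) (cc (m+2)) (cc m).neg x
    have e : J (fun η => Real.cos (2 * (m+2:ℕ) * η) + Real.cos (2 * (m:ℕ) * η)) x
        = J (fun η => Real.cos (2 * (m+2:ℕ) * η) - (-Real.cos (2 * (m:ℕ) * η))) x := by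
      apply J_congr; intro η; ring
    rw [e, this, phi_eq_J, phi_eq_J]
    have e2 : J (fun η => -Real.cos (2 * (m:ℕ) * η)) x = - J (fun η => Real.cos (2 * (m:ℕ) * η)) x := by
      have := J_const_mul (-1) (fun η => Real.cos (2 * (m:ℕ) * η)) x
      simpa using this
    rw [e2]
    ring
  rw [this, ← phi_eq_J]
  ring

lemma phi_abs_le (n : ℕ) {x : ℝ} (hx : 0 ≤ x) : |phi n x| ≤ π := by
  have := intervalIntegral.norm_integral_le_of_norm_le_const (C := 1)
    (f := fun η => Real.exp (-2 * x * Real.sin η) * Real.cos (2 * n * η)) (a := 0) (b := π) ?_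
  · rw [phi_eq_J]
    unfold J
    simpa [abs_of_nonneg Real.pi_nonneg] using this
  · intro η hη
    rw [Set.uIoc_of_le Real.pi_nonneg] at hη
    have hs : 0 ≤ Real.sin η := Real.sin_nonneg_of_nonneg_of_le_pi hη.1.le hη.2
    have he : Real.exp (-2 * x * Real.sin η) ≤ 1 := by
      rw [← Real.exp_zero]
      apply Real.exp_le_exp.mpr
      nlinarith
    rw [Real.norm_eq_abs, abs_mul, abs_of_pos (Real.exp_pos _)]
    calc Real.exp (-2 * x * Real.sin η) * |Real.cos (2 * n * η)| ≤ 1 * 1 := by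
          apply mul_le_mul he (Real.abs_cos_le_one _) (abs_nonneg _) zero_le_one
      _ = 1 := by ring

lemma phiD_abs_le (n : ℕ) {x : ℝ} (hx : 0 ≤ x) : |phiD n x| ≤ 2 * π := by
  have := intervalIntegral.norm_integral_le_of_norm_le_const (C := 2)
    (f := fun η => Real.exp (-2 * x * Real.sin η) * (-2 * Real.sin η * Real.cos (2 * n * η)))
    (a := 0) (b := π) ?_
  · unfold phiD J
    simp only [sub_zero, abs_of_nonneg Real.pi_nonneg] at this
    exact this
  · intro η hη
    rw [Set.uIoc_of_le Real.pi_nonneg] at hη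
    have hs : 0 ≤ Real.sin η := Real.sin_nonneg_of_nonneg_of_le_pi hη.1.le hη.2
    have he : Real.exp (-2 * x * Real.sin η) ≤ 1 := by
      rw [← Real.exp_zero]
      apply Real.exp_le_exp.mpr
      nlinarith
    rw [Real.norm_eq_abs, abs_mul, abs_of_pos (Real.exp_pos _)]
    have h1 : |(-2 * Real.sin η * Real.cos (2 * n * η))| ≤ 2 := by
      rw [abs_mul, abs_mul]
      have h2 : |(-2:ℝ)| = 2 := by norm_num
      rw [h2]
      nlinarith [abs_nonneg (Real.sin η), abs_nonneg (Real.cos (2 * n * η)),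
        Real.abs_cos_le_one (2 * (n:ℝ) * η), Real.abs_sin_le_one η]
    calc Real.exp (-2 * x * Real.sin η) * |(-2 * Real.sin η * Real.cos (2 * n * η))| ≤ 1 * 2 := by
          apply mul_le_mul he h1 (abs_nonneg _) zero_le_one
      _ = 2 := by ring

lemma J_add (P Q : ℝ → ℝ) (hP : Continuous P) (hQ : Continuous Q) (x : ℝ) :
    J (fun η => P η + Q η) x = J P x + J Q x := by
  unfold J
  rw [← intervalIntegral.integral_add]
  · apply intervalIntegral.integral_congr; intro t _; ring
  · apply Continuous.intervalIntegrable; continuity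
  · apply Continuous.intervalIntegrable; continuity

lemma ode_phi (n : ℕ) (x : ℝ) :
    (4 * x^2 + 4 * (n:ℝ)^2) * phi n x - x * phiD n x - x^2 * phiDD n x = 4 * x := by
  have cc : Continuous (fun η : ℝ => Real.cos (2 * (n:ℕ) * η)) :=
    Real.continuous_cos.comp (continuous_const.mul continuous_id)
  -- Step 1: the integral of the total derivative
  set F : ℝ → ℝ := fun η => Real.exp (-2 * x * Real.sin η) *
    (-2 * x * Real.cos η * Real.cos (2 * n * η) + 2 * n * Real.sin (2 * n * η)) with hF
  have key : ∀ η ∈ Set.uIcc (0:ℝ) π, HasDerivAt F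
      (Real.exp (-2 * x * Real.sin η) *
        ((4 * x^2 * Real.cos η ^ 2 + 2 * x * Real.sin η + 4 * (n:ℝ)^2) * Real.cos (2 * n * η))) η := by
    intro η _
    have hinner : HasDerivAt (fun η : ℝ => -2 * x * Real.sin η) (-2 * x * Real.cos η) η := by
      simpa using (Real.hasDerivAt_sin η).const_mul (-2 * x)
    have hE : HasDerivAt (fun η : ℝ => Real.exp (-2 * x * Real.sin η))
        (Real.exp (-2 * x * Real.sin η) * (-2 * x * Real.cos η)) η :=
      HasDerivAt.exp hinner
    have harg : HasDerivAt (fun η : ℝ => 2 * (n:ℝ) * η) (2 * (n:ℝ)) η := by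
      simpa using (hasDerivAt_id η).const_mul (2 * (n:ℝ))
    have hc2 : HasDerivAt (fun η : ℝ => Real.cos (2 * n * η))
        (-Real.sin (2 * n * η) * (2 * (n:ℝ))) η :=
      (Real.hasDerivAt_cos (2 * n * η)).comp η harg
    have hs2 : HasDerivAt (fun η : ℝ => Real.sin (2 * n * η))
        (Real.cos (2 * n * η) * (2 * (n:ℝ))) η :=
      (Real.hasDerivAt_sin (2 * n * η)).comp η harg
    have hp1 : HasDerivAt (fun η : ℝ => -2 * x * Real.cos η) (-2 * x * (-Real.sin η)) η := by
      simpa using (Real.hasDerivAt_cos η).const_mul (-2 * x)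
    have hA : HasDerivAt (fun η : ℝ =>
        -2 * x * Real.cos η * Real.cos (2 * n * η) + 2 * n * Real.sin (2 * n * η))
        ((-2 * x * (-Real.sin η)) * Real.cos (2 * n * η)
          + (-2 * x * Real.cos η) * (-Real.sin (2 * n * η) * (2 * (n:ℝ)))
          + 2 * n * (Real.cos (2 * n * η) * (2 * (n:ℝ)))) η := by
      exact (hp1.mul hc2).add (hs2.const_mul (2 * (n:ℝ)))
    have := hE.mul hA
    refine this.congr_deriv ?_
    ring
  have hint : ∫ η in (0:ℝ)..π, Real.exp (-2 * x * Real.sin η) *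
      ((4 * x^2 * Real.cos η ^ 2 + 2 * x * Real.sin η + 4 * (n:ℝ)^2) * Real.cos (2 * n * η))
      = F π - F 0 := by
    apply intervalIntegral.integral_eq_sub_of_hasDerivAt key
    apply Continuous.intervalIntegrable
    continuity
  have s2n : Real.sin (2 * (n:ℝ) * π) = 0 := by
    have h : (2:ℝ) * n * π = ((2 * n : ℕ) : ℝ) * π := by push_cast; ring
    rw [h, Real.sin_nat_mul_pi]
  have c2n : Real.cos (2 * (n:ℝ) * π) = 1 := by
    have h : (2:ℝ) * n * π = (n:ℝ) * (2 * π) := by ring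
    rw [h, Real.cos_nat_mul_two_pi]
  have hFval : F π - F 0 = 4 * x := by
    rw [hF]
    simp only [Real.sin_pi, Real.cos_pi, Real.sin_zero, Real.cos_zero, mul_zero, mul_one,
      Real.exp_zero, s2n, c2n]
    ring
  -- Step 2: linearity
  have hsplit : ∫ η in (0:ℝ)..π, Real.exp (-2 * x * Real.sin η) *
      ((4 * x^2 * Real.cos η ^ 2 + 2 * x * Real.sin η + 4 * (n:ℝ)^2) * Real.cos (2 * n * η))
      = (4 * x^2 + 4 * (n:ℝ)^2) * phi n x - x * phiD n x - x^2 * phiDD n x := by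
    have e1 : (∫ η in (0:ℝ)..π, Real.exp (-2 * x * Real.sin η) *
        ((4 * x^2 * Real.cos η ^ 2 + 2 * x * Real.sin η + 4 * (n:ℝ)^2) * Real.cos (2 * n * η)))
        = J (fun η => (4 * x^2 * Real.cos η ^ 2 + 2 * x * Real.sin η + 4 * (n:ℝ)^2)
            * Real.cos (2 * n * η)) x := rfl
    rw [e1]
    have e2 : J (fun η => (4 * x^2 * Real.cos η ^ 2 + 2 * x * Real.sin η + 4 * (n:ℝ)^2)
        * Real.cos (2 * n * η)) x
        = J (fun η => (4 * x^2 + 4 * (n:ℝ)^2) * Real.cos (2 * n * η)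
            - (x * (-2 * Real.sin η * Real.cos (2 * n * η))
              + x^2 * (-2 * Real.sin η * (-2 * Real.sin η * Real.cos (2 * n * η))))) x := by
      apply J_congr
      intro η
      linear_combination (4 * x^2 * Real.cos (2 * (n:ℝ) * η)) * (Real.sin_sq_add_cos_sq η)
    rw [e2]
    have cP : Continuous (fun η : ℝ => (4 * x^2 + 4 * (n:ℝ)^2) * Real.cos (2 * n * η)) :=
      continuous_const.mul cc
    have cQ1 : Continuous (fun η : ℝ => x * (-2 * Real.sin η * Real.cos (2 * n * η))) := by
      apply continuous_const.mul
      exact (continuous_const.mul Real.continuous_sin).mul cc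
    have cQ2 : Continuous (fun η : ℝ =>
        x^2 * (-2 * Real.sin η * (-2 * Real.sin η * Real.cos (2 * n * η)))) := by
      apply continuous_const.mul
      exact (continuous_const.mul Real.continuous_sin).mul
        ((continuous_const.mul Real.continuous_sin).mul cc)
    rw [J_sub _ _ cP (by exact cQ1.add cQ2 : Continuous (fun η : ℝ => x * (-2 * Real.sin η * Real.cos (2 * n * η)) + x^2 * (-2 * Real.sin η * (-2 * Real.sin η * Real.cos (2 * n * η))))), J_add _ _ cQ1 cQ2, J_const_mul, J_const_mul, J_const_mul]
    rw [phi_eq_J]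
    show _ = _ - x * phiD n x - x^2 * phiDD n x
    unfold phiD phiDD
    ring
  rw [hsplit] at hint
  rw [hint, hFval]

lemma deriv2_nonpos_of_isLocalMax {g g' : ℝ → ℝ} {d x₀ : ℝ}
    (hg : ∀ y, HasDerivAt g (g' y) y) (hg' : HasDerivAt g' d x₀)
    (hmax : IsLocalMax g x₀) : d ≤ 0 := by
  by_contra hd
  push_neg at hd
  have hz : g' x₀ = 0 := hmax.hasDerivAt_eq_zero (hg x₀)
  have hslope : Tendsto (slope g' x₀) (nhdsWithin x₀ {x₀}ᶜ) (nhds d) :=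
    hasDerivAt_iff_tendsto_slope.mp hg'
  have h1 : ∀ᶠ y in nhdsWithin x₀ {x₀}ᶜ, 0 < slope g' x₀ y :=
    hslope.eventually (eventually_gt_nhds hd)
  have h2 : ∀ᶠ y in nhdsWithin x₀ {x₀}ᶜ, g y ≤ g x₀ := nhdsWithin_le_nhds hmax
  have h3 := h1.and h2
  rw [eventually_nhdsWithin_iff] at h3
  obtain ⟨U, hU, hprop⟩ := eventually_nhds_iff.mp h3
  obtain ⟨ε, hε, hball⟩ := Metric.isOpen_iff.mp hprop.1 x₀ hprop.2
  set a := x₀ - ε/2 with ha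
  have ha_lt : a < x₀ := by rw [ha]; linarith
  have hmem : ∀ y, a ≤ y → y < x₀ → (0 < slope g' x₀ y ∧ g y ≤ g x₀) := by
    intro y hy1 hy2
    have hyU : y ∈ U := by
      apply hball
      rw [Metric.mem_ball, Real.dist_eq, abs_of_nonpos (by linarith)]
      rw [ha] at hy1; linarith
    exact hU y hyU (by simp; exact ne_of_lt hy2)
  have hneg : ∀ y ∈ Set.Ioo a x₀, g' y < 0 := by
    intro y hy
    have h4 := (hmem y hy.1.le hy.2).1
    have h5 : slope g' x₀ y = g' y / (y - x₀) := by
      rw [slope_def_field, hz]; ring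
    rw [h5] at h4
    have h6 : y - x₀ < 0 := by linarith [hy.2]
    by_contra hcon
    push_neg at hcon
    have : g' y / (y - x₀) ≤ 0 := div_nonpos_of_nonneg_of_nonpos hcon h6.le
    linarith
  have hanti : StrictAntiOn g (Set.Icc a x₀) := by
    apply strictAntiOn_of_deriv_neg (convex_Icc a x₀)
    · exact Continuous.continuousOn (by
        have : Differentiable ℝ g := fun y => (hg y).differentiableAt
        exact this.continuous)
    · intro y hy
      rw [interior_Icc] at hy
      rw [(hg y).deriv]
      exact hneg y hy
  have hlt : g x₀ < g a :=
    hanti (Set.left_mem_Icc.mpr ha_lt.le) (Set.right_mem_Icc.mpr ha_lt.le) ha_lt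
  have hle : g a ≤ g x₀ := (hmem a le_rfl ha_lt).2
  linarith

/-- The core analytic inequality: `φ_n(x) ≤ 4x/(4n²-1)` for `x ≥ 0`, `n ≥ 1`. -/
lemma lemA (n : ℕ) (hn : 1 ≤ n) : ∀ x : ℝ, 0 ≤ x → phi n x ≤ 4 * x / (4 * (n:ℝ)^2 - 1) := by
  have hn1 : (1:ℝ) ≤ n := by exact_mod_cast hn
  have hden : (0:ℝ) < 4 * (n:ℝ)^2 - 1 := by nlinarith
  set c : ℝ := 4 / (4 * (n:ℝ)^2 - 1) with hc
  have hcpos : 0 < c := by positivity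
  set w : ℝ → ℝ := fun x => phi n x - c * x with hw
  have hw0 : w 0 = 0 := by
    rw [hw]; simp [phi_zero n hn]
  have hwd : ∀ y, HasDerivAt w (phiD n y - c) y := by
    intro y
    exact (hasDerivAt_phi n y).sub ((hasDerivAt_id y).const_mul c |>.congr_deriv (by ring))
  have hwdd : ∀ y, HasDerivAt (fun y => phiD n y - c) (phiDD n y) y := by
    intro y
    simpa using (hasDerivAt_phiD n y).sub_const c
  -- suppose for contradiction w is positive somewhere on [0,∞)
  by_contra hcon
  push_neg at hcon
  obtain ⟨x₁, hx₁, hx₁'⟩ := hcon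
  have hwx₁ : 0 < w x₁ := by
    rw [hw]
    simp only
    have : c * x₁ = 4 * x₁ / (4 * (n:ℝ)^2 - 1) := by rw [hc]; ring
    linarith [this ▸ hx₁']
  -- w is eventually very negative
  set R : ℝ := max ((π + 1) / c) x₁ + 1 with hR
  have hRpos : 0 < R := by
    have : 0 ≤ x₁ := hx₁
    have h1 : x₁ ≤ max ((π + 1) / c) x₁ := le_max_right _ _
    rw [hR]; linarith
  have hx₁R : x₁ < R := by
    have h1 : x₁ ≤ max ((π + 1) / c) x₁ := le_max_right _ _
    rw [hR]; linarith
  have hwR : ∀ x : ℝ, R ≤ x → w x < 0 := by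
    intro x hx
    have hxpos : (0:ℝ) ≤ x := by linarith
    have h1 : phi n x ≤ π := (abs_le.mp (phi_abs_le n hxpos)).2
    have h2 : (π + 1) / c < x := by
      have : (π + 1) / c ≤ max ((π + 1) / c) x₁ := le_max_left _ _
      rw [hR] at hx; linarith
    have h3 : π + 1 < c * x := by
      rw [div_lt_iff₀ hcpos] at h2; linarith [h2]
    rw [hw]; simp only; nlinarith [Real.pi_pos]
  -- maximum on [0, R]
  have hcont : ContinuousOn w (Set.Icc 0 R) := by
    apply Continuous.continuousOn
    exact (continuous_phi n).sub (continuous_const.mul continuous_id)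
  obtain ⟨z, hzmem, hzmax⟩ := (isCompact_Icc).exists_isMaxOn
    (Set.nonempty_Icc.mpr hRpos.le) hcont
  have hzval : 0 < w z := lt_of_lt_of_le hwx₁ (hzmax (Set.mem_Icc.mpr ⟨hx₁, hx₁R.le⟩))
  have hz0 : 0 < z := by
    rcases lt_or_eq_of_le hzmem.1 with h | h
    · exact h
    · exfalso; rw [← h] at hzval; rw [hw0] at hzval; exact lt_irrefl 0 hzval
  have hzR : z < R := by
    rcases lt_or_eq_of_le hzmem.2 with h | h
    · exact h
    · exfalso; have := hwR z (le_of_eq h.symm); linarith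
  -- z is a local max on the open set (0, R)
  have hlocmax : IsLocalMax w z := by
    have hnhds : Set.Ioo 0 R ∈ nhds z := (isOpen_Ioo).mem_nhds ⟨hz0, hzR⟩
    filter_upwards [hnhds] with y hy
    exact hzmax (Set.mem_Icc.mpr ⟨hy.1.le, hy.2.le⟩)
  -- second derivative test and ODE
  have hd2 : phiDD n z ≤ 0 := deriv2_nonpos_of_isLocalMax hwd (hwdd z) hlocmax
  have hd1 : phiD n z - c = 0 := hlocmax.hasDerivAt_eq_zero (hwd z)
  have hode := ode_phi n z
  have hphiz : c * z < phi n z := by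
    have : w z = phi n z - c * z := rfl
    linarith [hzval, this ▸ hzval]
  have hc4 : c * (4 * (n:ℝ)^2 - 1) = 4 := by rw [hc]; field_simp
  have hdd : z^2 * phiDD n z ≤ 0 := mul_nonpos_of_nonneg_of_nonpos (sq_nonneg z) hd2
  have h5 : (4 * z^2 + 4 * (n:ℝ)^2) * phi n z ≤ 4 * z + z * c := by
    have : phiD n z = c := by linarith
    rw [this] at hode
    linarith
  have h6 : (4 * z^2 + 4 * (n:ℝ)^2) * (c * z) < (4 * z^2 + 4 * (n:ℝ)^2) * phi n z :=
    mul_lt_mul_of_pos_left hphiz (by positivity)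
  have e1 : 4 * z + z * c = 4 * (n:ℝ)^2 * c * z := by rw [hc]; field_simp; ring
  have h7 : (4 * z^2 + 4 * (n:ℝ)^2) * (c * z) < 4 * (n:ℝ)^2 * c * z := by linarith
  have h8 : 0 < 4 * z^2 * (c * z) := by positivity
  nlinarith [h7, h8]

lemma continuous_phiDD (n : ℕ) : Continuous (phiDD n) := by
  have hP : Continuous (fun η : ℝ => -2 * Real.sin η *
      (-2 * Real.sin η * Real.cos (2 * n * η))) := by
    have cc : Continuous (fun η : ℝ => Real.cos (2 * (n:ℕ) * η)) :=
      Real.continuous_cos.comp (continuous_const.mul continuous_id)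
    exact (continuous_const.mul Real.continuous_sin).mul
      ((continuous_const.mul Real.continuous_sin).mul cc)
  have : Differentiable ℝ (phiDD n) := fun x => (J_hasDerivAt _ hP x).differentiableAt
  exact this.continuous

set_option maxHeartbeats 1000000 in
theorem stmt_18 (b : ℝ) (hb : 0 < b) (f : ℝ → ℝ)
    (hC2 : ContDiffOn ℝ 2 f (Set.Ioi 0))
    (hpos : ∀ x > (0:ℝ), 0 ≤ f x)
    (hbd : ∃ C : ℝ, ∀ᶠ x in nhdsWithin 0 (Set.Ioi 0),
      x * |f x| ≤ C ∧ x^2 * |deriv f x| ≤ C)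
    (htop : Tendsto f atTop (nhds 0))
    (htop' : Tendsto (fun x => x * deriv f x) atTop (nhds 0))
    (hconv : ∀ x > (0:ℝ), 0 ≤ deriv (deriv f) x)
    (hint : ∀ n : ℕ, IntegrableOn (fun x => phi n (b * x) * f x) (Set.Ioi 0)) :
    ∀ n : ℕ, 2 ≤ n → 0 ≤ lamf b f (n + 1) + lamf b f (n - 1) - 2 * lamf b f n := by
  intro n hn
  have hn1 : 1 ≤ n := by omega
  have hn1R : (1:ℝ) ≤ n := by exact_mod_cast hn1
  have hden : (0:ℝ) < 4 * (n:ℝ)^2 - 1 := by nlinarith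
  set c : ℝ := 4 / (4 * (n:ℝ)^2 - 1) with hc
  have hcpos : 0 < c := by positivity
  set W : ℝ → ℝ := fun x => phi n (b * x) - c * (b * x) with hW
  set Wd : ℝ → ℝ := fun x => b * phiD n (b * x) - c * b with hWd
  set Wdd : ℝ → ℝ := fun x => b^2 * phiDD n (b * x) with hWdd
  have hbx : ∀ x : ℝ, HasDerivAt (fun x : ℝ => b * x) b x := fun x => by
    simpa using (hasDerivAt_id x).const_mul b
  have hWderiv : ∀ x, HasDerivAt W (Wd x) x := by
    intro x
    have h1 := (hasDerivAt_phi n (b * x)).comp x (hbx x)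
    have h2 := (hbx x).const_mul c
    have h3 := h1.sub h2
    refine h3.congr_deriv ?_
    rw [hWd]; ring
  have hWdderiv : ∀ x, HasDerivAt Wd (Wdd x) x := by
    intro x
    have h1 := ((hasDerivAt_phiD n (b * x)).comp x (hbx x)).const_mul b
    have h2 := h1.sub_const (c * b)
    refine h2.congr_deriv ?_
    rw [hWdd]; ring
  have hWdd_cont : Continuous Wdd :=
    continuous_const.mul ((continuous_phiDD n).comp (continuous_const.mul continuous_id))
  have hW_cont : Continuous W := by
    have : Differentiable ℝ W := fun x => (hWderiv x).differentiableAt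
    exact this.continuous
  have hWd_cont : Continuous Wd := by
    have : Differentiable ℝ Wd := fun x => (hWdderiv x).differentiableAt
    exact this.continuous
  have hidx : ∀ x : ℝ, phiDD n x = 2 * phi n x - phi (n + 1) x - phi (n - 1) x := by
    intro x
    have h := phiDD_eq (n - 1) x
    have e1 : n - 1 + 1 = n := by omega
    have e2 : n - 1 + 2 = n + 1 := by omega
    rw [e1, e2] at h
    exact h
  have hW0 : W 0 = 0 := by
    rw [hW]; simp [phi_zero n hn1]
  have hWd0 : Wd 0 = 0 := by
    rw [hWd]; simp only [mul_zero]
    rw [phiD_zero n hn1, hc]; ring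
  have hWdd0 : Wdd 0 = 0 := by
    rw [hWdd]; simp only [mul_zero]
    rw [hidx 0, phi_zero n hn1, phi_zero (n+1) (by omega), phi_zero (n-1) (by omega)]
    ring
  have hWneg : ∀ x : ℝ, 0 ≤ x → W x ≤ 0 := by
    intro x hx
    have h := lemA n hn1 (b * x) (by positivity)
    have h2 : c * (b * x) = 4 * (b * x) / (4 * (n:ℝ)^2 - 1) := by rw [hc]; ring
    rw [hW]; simp only
    linarith
  have hWd_bd : ∀ x : ℝ, 0 ≤ x → |Wd x| ≤ b * (2 * π + c) := by
    intro x hx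
    rw [hWd]; simp only
    have h1 : |phiD n (b * x)| ≤ 2 * π := phiD_abs_le n (by positivity)
    calc |b * phiD n (b * x) - c * b| ≤ |b * phiD n (b * x)| + |c * b| := abs_sub _ _
      _ = b * |phiD n (b * x)| + c * b := by
          rw [abs_mul, abs_mul, abs_of_pos hb, abs_of_pos hcpos]
      _ ≤ b * (2 * π) + c * b := by nlinarith
      _ = b * (2 * π + c) := by ring
  -- facts about f
  have hopen : IsOpen (Set.Ioi (0:ℝ)) := isOpen_Ioi
  have hf_diff : ∀ x ∈ Set.Ioi (0:ℝ), HasDerivAt f (deriv f x) x := by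
    intro x hx
    have h1 : DifferentiableOn ℝ f (Set.Ioi 0) := hC2.differentiableOn (by norm_num)
    exact (h1.differentiableAt (hopen.mem_nhds hx)).hasDerivAt
  have hdf_C1 : ContDiffOn ℝ 1 (deriv f) (Set.Ioi 0) :=
    hC2.deriv_of_isOpen hopen (by norm_num)
  have hdf_diff : ∀ x ∈ Set.Ioi (0:ℝ), HasDerivAt (deriv f) (deriv (deriv f) x) x := by
    intro x hx
    have h1 : DifferentiableOn ℝ (deriv f) (Set.Ioi 0) := hdf_C1.differentiableOn (by norm_num)
    exact (h1.differentiableAt (hopen.mem_nhds hx)).hasDerivAt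
  have hf_cont : ContinuousOn f (Set.Ioi 0) := hC2.continuousOn
  have hdf_cont : ContinuousOn (deriv f) (Set.Ioi 0) := hdf_C1.continuousOn
  have hddf_cont : ContinuousOn (deriv (deriv f)) (Set.Ioi 0) :=
    hdf_C1.continuousOn_deriv_of_isOpen hopen (le_refl 1)
  -- integration by parts on [ε, T]
  have hIBP : ∀ ε T : ℝ, 0 < ε → ε ≤ T →
      (∫ x in ε..T, f x * Wdd x) = f T * Wd T - f ε * Wd ε
        - (deriv f T * W T - deriv f ε * W ε) + ∫ x in ε..T, deriv (deriv f) x * W x := by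
    intro ε T hε hεT
    have huIcc : Set.uIcc ε T ⊆ Set.Ioi (0:ℝ) := by
      rw [Set.uIcc_of_le hεT]
      intro y hy
      exact lt_of_lt_of_le hε hy.1
    have h1 := intervalIntegral.integral_mul_deriv_eq_deriv_mul
      (u := f) (u' := fun x => deriv f x) (v := Wd) (v' := Wdd) (a := ε) (b := T)
      (fun x hx => hf_diff x (huIcc hx)) (fun x _ => hWdderiv x)
      ((hdf_cont.mono huIcc).intervalIntegrable)
      (hWdd_cont.intervalIntegrable _ _)
    have h2 := intervalIntegral.integral_mul_deriv_eq_deriv_mul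
      (u := fun x => deriv f x) (u' := fun x => deriv (deriv f) x) (v := W) (v' := Wd)
      (a := ε) (b := T)
      (fun x hx => hdf_diff x (huIcc hx)) (fun x _ => hWderiv x)
      ((hddf_cont.mono huIcc).intervalIntegrable)
      (hWd_cont.intervalIntegrable _ _)
    rw [h1, h2]
    ring
  have hI3 : ∀ ε T : ℝ, 0 < ε → ε ≤ T → (∫ x in ε..T, deriv (deriv f) x * W x) ≤ 0 := by
    intro ε T hε hεT
    have hnn := intervalIntegral.integral_nonneg (μ := volume)
      (f := fun x => -(deriv (deriv f) x * W x)) hεT ?_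
    · rw [intervalIntegral.integral_neg] at hnn
      linarith
    · intro u hu
      have hu0 : 0 < u := lt_of_lt_of_le hε hu.1
      have h1 := hconv u hu0
      have h2 := hWneg u hu0.le
      show 0 ≤ -(deriv (deriv f) u * W u)
      nlinarith [mul_nonneg h1 (neg_nonneg.mpr h2)]
  -- sequences
  set eps : ℕ → ℝ := fun j => 1 / (j + 1) with heps
  set Ts : ℕ → ℝ := fun j => (j : ℝ) with hTs
  have heps_pos : ∀ j : ℕ, 0 < eps j := fun j => by rw [heps]; positivity
  have heps_le_one : ∀ j : ℕ, eps j ≤ 1 := by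
    intro j
    rw [heps]
    simp only
    rw [div_le_one (by positivity)]
    linarith [Nat.cast_nonneg (α := ℝ) j]
  have heps_le : ∀ j : ℕ, 1 ≤ j → eps j ≤ Ts j := by
    intro j hj
    have h1 : (1:ℝ) ≤ j := by exact_mod_cast hj
    calc eps j ≤ 1 := heps_le_one j
      _ ≤ Ts j := by rw [hTs]; exact h1
  have hepsto0 : Tendsto eps atTop (nhds (0:ℝ)) := tendsto_one_div_add_atTop_nhds_zero_nat
  have hepsto : Tendsto eps atTop (nhdsWithin 0 (Set.Ioi 0)) :=
    tendsto_nhdsWithin_of_tendsto_nhds_of_eventually_within _ hepsto0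
      (Filter.Eventually.of_forall fun j => heps_pos j)
  have hTsto : Tendsto Ts atTop atTop := tendsto_natCast_atTop_atTop
  -- integrability of f * Wdd
  have hgid : ∀ x : ℝ, f x * Wdd x = b^2 * (2 * (phi n (b * x) * f x))
      - b^2 * (phi (n + 1) (b * x) * f x) - b^2 * (phi (n - 1) (b * x) * f x) := by
    intro x
    rw [hWdd]
    simp only
    rw [hidx (b * x)]
    ring
  have hg_int : IntegrableOn (fun x => f x * Wdd x) (Set.Ioi 0) := by
    have h1 := ((((hint n).const_mul 2).const_mul (b^2)).sub
      ((hint (n+1)).const_mul (b^2))).sub ((hint (n-1)).const_mul (b^2))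
    apply h1.congr
    apply Filter.Eventually.of_forall
    intro x
    simp only [Pi.sub_apply]
    rw [hgid x]
  -- convergence of interval integrals
  have hmono : Monotone (fun j : ℕ => Set.Ioc (eps j) (Ts j)) := by
    intro i j hij
    apply Set.Ioc_subset_Ioc
    · rw [heps]
      simp only
      apply one_div_le_one_div_of_le (by positivity)
      have h1 : (i:ℝ) ≤ j := by exact_mod_cast hij
      linarith
    · rw [hTs]; simp only; exact_mod_cast hij
  have hunion : (⋃ j, Set.Ioc (eps j) (Ts j)) = Set.Ioi (0:ℝ) := by
    ext x
    simp only [Set.mem_iUnion, Set.mem_Ioc, Set.mem_Ioi]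
    constructor
    · rintro ⟨j, h1, _⟩
      exact lt_trans (heps_pos j) h1
    · intro hx
      obtain ⟨j₁, hj₁⟩ := exists_nat_one_div_lt hx
      obtain ⟨j₂, hj₂⟩ := exists_nat_ge x
      refine ⟨max j₁ j₂, ?_, ?_⟩
      · have h1 : eps (max j₁ j₂) ≤ eps j₁ := by
          rw [heps]
          simp only
          apply one_div_le_one_div_of_le (by positivity)
          have h2 : (j₁:ℝ) ≤ ((max j₁ j₂ : ℕ) : ℝ) := by exact_mod_cast le_max_left j₁ j₂
          linarith
        have h3 : eps j₁ < x := hj₁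
        linarith
      · rw [hTs]
        have h4 : (j₂:ℝ) ≤ ((max j₁ j₂ : ℕ) : ℝ) := by exact_mod_cast le_max_right j₁ j₂
        linarith
  have hT1 : Tendsto (fun j => ∫ x in Set.Ioc (eps j) (Ts j), f x * Wdd x) atTop
      (nhds (∫ x in Set.Ioi 0, f x * Wdd x)) := by
    have h1 := MeasureTheory.tendsto_setIntegral_of_monotone
      (s := fun j : ℕ => Set.Ioc (eps j) (Ts j)) (fun j => measurableSet_Ioc) hmono
      (by rw [hunion]; exact hg_int)
    rw [hunion] at h1
    exact h1
  have hT1' : Tendsto (fun j => ∫ x in (eps j)..(Ts j), f x * Wdd x) atTop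
      (nhds (∫ x in Set.Ioi 0, f x * Wdd x)) := by
    apply hT1.congr'
    filter_upwards [eventually_ge_atTop 1] with j hj
    rw [intervalIntegral.integral_of_le (heps_le j hj)]
  -- boundary terms at infinity
  have hfT : Tendsto (fun j => f (Ts j)) atTop (nhds 0) := htop.comp hTsto
  have hB1 : Tendsto (fun j => f (Ts j) * Wd (Ts j)) atTop (nhds 0) := by
    apply squeeze_zero_norm (a := fun j => |f (Ts j)| * (b * (2 * π + c)))
    · intro j
      rw [Real.norm_eq_abs, abs_mul]
      exact mul_le_mul_of_nonneg_left (hWd_bd (Ts j) (by rw [hTs]; positivity)) (abs_nonneg _)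
    · simpa using (hfT.abs.mul_const (b * (2 * π + c)))
  have hdfT : Tendsto (fun x : ℝ => deriv f x) atTop (nhds (0:ℝ)) := by
    have h1 := htop'.mul (tendsto_inv_atTop_zero (𝕜 := ℝ))
    rw [mul_zero] at h1
    apply Tendsto.congr' ?_ h1
    filter_upwards [eventually_gt_atTop (0:ℝ)] with x hx
    field_simp
  have hB2 : Tendsto (fun j => deriv f (Ts j) * W (Ts j)) atTop (nhds 0) := by
    have hA : Tendsto (fun j => deriv f (Ts j) * phi n (b * Ts j)) atTop (nhds 0) := by
      apply squeeze_zero_norm (a := fun j => |deriv f (Ts j)| * π)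
      · intro j
        rw [Real.norm_eq_abs, abs_mul]
        exact mul_le_mul_of_nonneg_left (phi_abs_le n (by rw [hTs]; positivity)) (abs_nonneg _)
      · simpa using ((hdfT.comp hTsto).abs.mul_const π)
    have hBt : Tendsto (fun j => Ts j * deriv f (Ts j)) atTop (nhds (0:ℝ)) := htop'.comp hTsto
    have hB' := hBt.const_mul (c * b)
    rw [mul_zero] at hB'
    have h2 := hA.sub hB'
    rw [sub_zero] at h2
    apply h2.congr
    intro j
    rw [hW]
    simp only
    ring
  -- boundary terms at zero
  obtain ⟨C, hC⟩ := hbd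
  have hC0 : 0 ≤ C := by
    obtain ⟨x₀, hx₀, hx₀mem⟩ := (hC.and eventually_mem_nhdsWithin).exists
    have hx0 : 0 < x₀ := hx₀mem
    exact le_trans (mul_nonneg hx0.le (abs_nonneg _)) hx₀.1
  have hCev : ∀ᶠ j in atTop, eps j * |f (eps j)| ≤ C ∧ (eps j)^2 * |deriv f (eps j)| ≤ C :=
    hepsto.eventually hC
  have hsmall : ∀ δ' : ℝ, 0 < δ' → ∃ r : ℝ, 0 < r ∧
      ∀ s : ℝ, 0 ≤ s → s < r → |Wd s| ≤ δ' * s ∧ |W s| ≤ δ' * s^2 := by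
    intro δ' hδ'
    obtain ⟨r, hr, hball⟩ := Metric.continuousAt_iff.mp hWdd_cont.continuousAt δ' hδ'
    refine ⟨r, hr, ?_⟩
    have hWds : ∀ t : ℝ, 0 ≤ t → t < r → |Wd t| ≤ δ' * t := by
      intro t ht htr
      have hFTC : ∫ x in (0:ℝ)..t, Wdd x = Wd t - Wd 0 :=
        intervalIntegral.integral_eq_sub_of_hasDerivAt (fun x _ => hWdderiv x)
          (hWdd_cont.intervalIntegrable _ _)
      rw [hWd0, sub_zero] at hFTC
      rw [← hFTC]
      have hb2 := intervalIntegral.norm_integral_le_of_norm_le_const (C := δ')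
        (f := Wdd) (a := 0) (b := t) ?_
      · calc |∫ x in (0:ℝ)..t, Wdd x| ≤ δ' * |t - 0| := hb2
          _ = δ' * t := by rw [sub_zero, abs_of_nonneg ht]
      · intro y hy
        rw [Set.uIoc_of_le ht] at hy
        have hdy : dist y 0 < r := by
          rw [Real.dist_eq, sub_zero, abs_of_pos hy.1]
          exact lt_of_le_of_lt hy.2 htr
        have h2 := hball hdy
        rw [Real.dist_eq, hWdd0, sub_zero, ← Real.norm_eq_abs] at h2
        exact h2.le
    intro s hs hsr
    refine ⟨hWds s hs hsr, ?_⟩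
    have hFTC : ∫ x in (0:ℝ)..s, Wd x = W s - W 0 :=
      intervalIntegral.integral_eq_sub_of_hasDerivAt (fun x _ => hWderiv x)
        (hWd_cont.intervalIntegrable _ _)
    rw [hW0, sub_zero] at hFTC
    rw [← hFTC]
    have hb2 := intervalIntegral.norm_integral_le_of_norm_le_const (C := δ' * s)
      (f := Wd) (a := 0) (b := s) ?_
    · calc |∫ x in (0:ℝ)..s, Wd x| ≤ δ' * s * |s - 0| := hb2
        _ = δ' * s^2 := by rw [sub_zero, abs_of_nonneg hs]; ring
    · intro y hy
      rw [Set.uIoc_of_le hs] at hy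
      have h3 := hWds y hy.1.le (lt_of_le_of_lt hy.2 hsr)
      rw [Real.norm_eq_abs]
      calc |Wd y| ≤ δ' * y := h3
        _ ≤ δ' * s := by nlinarith [hy.2]
  have hE1 : Tendsto (fun j => f (eps j) * Wd (eps j)) atTop (nhds 0) := by
    rw [Metric.tendsto_nhds]
    intro δ hδ
    have hδ' : (0:ℝ) < δ / (2 * (C + 1)) := by positivity
    obtain ⟨r, hr, hsm⟩ := hsmall _ hδ'
    have hev2 : ∀ᶠ j in atTop, eps j < r := hepsto0.eventually (eventually_lt_nhds hr)
    filter_upwards [hCev, hev2] with j h1 h2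
    have h3 := (hsm (eps j) (heps_pos j).le h2).1
    rw [Real.dist_eq, sub_zero, abs_mul]
    calc |f (eps j)| * |Wd (eps j)| ≤ |f (eps j)| * (δ / (2 * (C + 1)) * eps j) :=
          mul_le_mul_of_nonneg_left h3 (abs_nonneg _)
      _ = (δ / (2 * (C + 1))) * (eps j * |f (eps j)|) := by ring
      _ ≤ (δ / (2 * (C + 1))) * C := mul_le_mul_of_nonneg_left h1.1 hδ'.le
      _ < δ := by
          rw [div_mul_eq_mul_div, div_lt_iff₀ (by positivity)]
          nlinarith
  have hE2 : Tendsto (fun j => deriv f (eps j) * W (eps j)) atTop (nhds 0) := by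
    rw [Metric.tendsto_nhds]
    intro δ hδ
    have hδ' : (0:ℝ) < δ / (2 * (C + 1)) := by positivity
    obtain ⟨r, hr, hsm⟩ := hsmall _ hδ'
    have hev2 : ∀ᶠ j in atTop, eps j < r := hepsto0.eventually (eventually_lt_nhds hr)
    filter_upwards [hCev, hev2] with j h1 h2
    have h3 := (hsm (eps j) (heps_pos j).le h2).2
    rw [Real.dist_eq, sub_zero, abs_mul]
    calc |deriv f (eps j)| * |W (eps j)| ≤ |deriv f (eps j)| * (δ / (2 * (C + 1)) * (eps j)^2) :=
          mul_le_mul_of_nonneg_left h3 (abs_nonneg _)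
      _ = (δ / (2 * (C + 1))) * ((eps j)^2 * |deriv f (eps j)|) := by ring
      _ ≤ (δ / (2 * (C + 1))) * C := mul_le_mul_of_nonneg_left h1.2 hδ'.le
      _ < δ := by
          rw [div_mul_eq_mul_div, div_lt_iff₀ (by positivity)]
          nlinarith
  -- assembly
  have hBnd : Tendsto (fun j => f (Ts j) * Wd (Ts j) - f (eps j) * Wd (eps j)
      - (deriv f (Ts j) * W (Ts j) - deriv f (eps j) * W (eps j))) atTop (nhds 0) := by
    have h1 := (hB1.sub hE1).sub (hB2.sub hE2)
    simpa using h1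
  have hle : (∫ x in Set.Ioi 0, f x * Wdd x) ≤ 0 := by
    apply le_of_tendsto_of_tendsto hT1' hBnd
    filter_upwards [eventually_ge_atTop 1] with j hj
    rw [hIBP (eps j) (Ts j) (heps_pos j) (heps_le j hj)]
    have h4 := hI3 (eps j) (Ts j) (heps_pos j) (heps_le j hj)
    linarith
  have hsum : (∫ x in Set.Ioi 0, f x * Wdd x)
      = b^2 * (2 * (∫ x in Set.Ioi 0, phi n (b * x) * f x))
        - b^2 * (∫ x in Set.Ioi 0, phi (n + 1) (b * x) * f x)
        - b^2 * (∫ x in Set.Ioi 0, phi (n - 1) (b * x) * f x) := by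
    have i1 : IntegrableOn (fun x => b^2 * (2 * (phi n (b * x) * f x))) (Set.Ioi 0) := by
      exact ((hint n).const_mul 2).const_mul (b^2)
    have i2 : IntegrableOn (fun x => b^2 * (phi (n+1) (b * x) * f x)) (Set.Ioi 0) := by
      exact (hint (n+1)).const_mul (b^2)
    have i3 : IntegrableOn (fun x => b^2 * (phi (n-1) (b * x) * f x)) (Set.Ioi 0) := by
      exact (hint (n-1)).const_mul (b^2)
    rw [MeasureTheory.setIntegral_congr_fun measurableSet_Ioi (fun x _ => hgid x)]
    rw [MeasureTheory.integral_sub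
      (f := fun x => b^2 * (2 * (phi n (b * x) * f x)) - b^2 * (phi (n+1) (b * x) * f x))
      (g := fun x => b^2 * (phi (n-1) (b * x) * f x)) (by exact i1.sub i2) i3]
    rw [MeasureTheory.integral_sub
      (f := fun x => b^2 * (2 * (phi n (b * x) * f x)))
      (g := fun x => b^2 * (phi (n+1) (b * x) * f x)) i1 i2]
    rw [MeasureTheory.integral_const_mul, MeasureTheory.integral_const_mul,
      MeasureTheory.integral_const_mul, MeasureTheory.integral_const_mul]
  rw [hsum] at hle
  have hb2 : (0:ℝ) < b^2 := by positivity
  have hfinal : 2 * (∫ x in Set.Ioi 0, phi n (b * x) * f x)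
      ≤ (∫ x in Set.Ioi 0, phi (n + 1) (b * x) * f x)
        + (∫ x in Set.Ioi 0, phi (n - 1) (b * x) * f x) := by
    nlinarith [hle, hb2]
  show (0:ℝ) ≤ 2 * (∫ x in Set.Ioi 0, phi (n+1) (b * x) * f x)
      + 2 * (∫ x in Set.Ioi 0, phi (n-1) (b * x) * f x)
      - 2 * (2 * ∫ x in Set.Ioi 0, phi n (b * x) * f x)
  linarith
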